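/- For the exponential rate function r(z) = e^{−β/2}·e^{βz} with β > 0, the mean of μ^{(θ)} shifts by exactly one when θ increases by β: ∑_{z∈ℤ} z·μ^{(θ+β)}(z) = 1 + ∑_{z∈ℤ} z·μ^{(θ)}(z), for every θ ∈ ℝ (both families being summable). -/

import Mathlib

open Real

/-- The generalized factorial `r(z)! := ∏_{y=1}^{|z|} r(y)`. -/
noncomputable def rfact (r : ℤ → ℝ) (z : ℤ) : ℝ :=
  ∏ y ∈ Finset.range z.natAbs, r (y + 1)

/-- The partition function `Z(θ) := ∑_{z ∈ ℤ} e^{θ z} / r(z)!`. -/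
noncomputable def Zfun (r : ℤ → ℝ) (θ : ℝ) : ℝ :=
  ∑' z : ℤ, Real.exp (θ * z) / rfact r z

/-- The single-site probability mass function `μ^{(θ)}(z) := e^{θ z} / (Z(θ) r(z)!)`. -/
noncomputable def mu (r : ℤ → ℝ) (θ : ℝ) (z : ℤ) : ℝ :=
  Real.exp (θ * z) / (Zfun r θ * rfact r z)

lemma sum_aux (β : ℝ) (n : ℕ) :
    ∑ y ∈ Finset.range n, (β * ((y : ℝ) + 1) - β / 2) = β * (n : ℝ) ^ 2 / 2 := by
  induction n with
  | zero => simp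
  | succ k ih => rw [Finset.sum_range_succ, ih]; push_cast; ring

lemma rfact_eq (β : ℝ) (r : ℤ → ℝ)
    (hr : ∀ z : ℤ, r z = Real.exp (-β / 2) * Real.exp (β * z)) (z : ℤ) :
    rfact r z = Real.exp (β * (z : ℝ) ^ 2 / 2) := by
  unfold rfact
  have h1 : ∀ y ∈ Finset.range z.natAbs,
      r (y + 1) = Real.exp (β * ((y : ℝ) + 1) - β / 2) := by
    intro y _
    rw [hr, ← Real.exp_add]
    push_cast
    ring_nf
  rw [Finset.prod_congr rfl h1, ← Real.exp_sum, sum_aux]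
  congr 1
  rw [Nat.cast_natAbs, Int.cast_abs, sq_abs]

-- weight function
noncomputable def gw (β θ : ℝ) (z : ℤ) : ℝ := Real.exp (θ * z - β * (z : ℝ) ^ 2 / 2)

lemma summable_nat_gw (β θ : ℝ) (hβ : 0 < β) :
    Summable (fun n : ℕ => ((n : ℝ) + 1) * Real.exp (θ * n - β * (n : ℝ) ^ 2 / 2)) := by
  have hbound : ∀ n : ℕ, ‖((n : ℝ) + 1) * Real.exp (θ * n - β * (n : ℝ) ^ 2 / 2)‖
      ≤ Real.exp ((θ + 1) ^ 2 / (2 * β)) * (((n : ℝ) + 1) * (Real.exp (-1)) ^ n) := by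
    intro n
    rw [Real.norm_eq_abs, abs_mul, abs_of_nonneg (by positivity), abs_of_nonneg (Real.exp_nonneg _)]
    rw [← Real.exp_nat_mul]
    have key : θ * n - β * (n : ℝ) ^ 2 / 2 ≤ (θ + 1) ^ 2 / (2 * β) + (n : ℝ) * (-1) := by
      have hβ' : (0 : ℝ) < 2 * β := by linarith
      rw [← sub_nonneg]
      have heq : (θ + 1) ^ 2 / (2 * β) + (n : ℝ) * (-1) - (θ * n - β * (n : ℝ) ^ 2 / 2)
          = ((n : ℝ) * β - (θ + 1)) ^ 2 / (2 * β) := by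
        field_simp
        ring
      rw [heq]
      positivity
    calc ((n : ℝ) + 1) * Real.exp (θ * n - β * (n : ℝ) ^ 2 / 2)
        ≤ ((n : ℝ) + 1) * Real.exp ((θ + 1) ^ 2 / (2 * β) + (n : ℝ) * (-1)) := by
          apply mul_le_mul_of_nonneg_left (Real.exp_le_exp.2 key) (by positivity)
      _ = Real.exp ((θ + 1) ^ 2 / (2 * β)) * (((n : ℝ) + 1) * Real.exp ((n : ℝ) * (-1))) := by
          rw [Real.exp_add]; ring
  apply Summable.of_norm_bounded (Summable.mul_left _ ?_) hbound
  have h1 : Summable (fun n : ℕ => ((n : ℝ)) * (Real.exp (-1)) ^ n) := by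
    have := summable_pow_mul_geometric_of_norm_lt_one (R := ℝ) 1 (r := Real.exp (-1))
      (by rw [Real.norm_eq_abs, abs_of_nonneg (Real.exp_nonneg _)]; exact Real.exp_lt_one_iff.2 (by norm_num))
    simpa using this
  have h2 : Summable (fun n : ℕ => (Real.exp (-1)) ^ n) :=
    summable_geometric_of_lt_one (Real.exp_nonneg _) (Real.exp_lt_one_iff.2 (by norm_num))
  simpa [add_mul] using h1.add h2

lemma summable_abs_mul_gw (β θ : ℝ) (hβ : 0 < β) :
    Summable (fun z : ℤ => (|(z : ℝ)| + 1) * gw β θ z) := by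
  apply Summable.of_nat_of_neg
  · simpa [gw] using summable_nat_gw β θ hβ
  · have := summable_nat_gw β (-θ) hβ
    apply this.congr
    intro n
    simp only [gw, Int.cast_neg, Int.cast_natCast, abs_neg, Nat.abs_cast]
    ring_nf

lemma summable_gw (β θ : ℝ) (hβ : 0 < β) : Summable (gw β θ) := by
  apply Summable.of_nonneg_of_le (fun z => Real.exp_nonneg _)
    (fun z => ?_) (summable_abs_mul_gw β θ hβ)
  have h1 : (0 : ℝ) ≤ |(z : ℝ)| := abs_nonneg _
  have h2 : (0 : ℝ) ≤ gw β θ z := Real.exp_nonneg _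
  have h3 : Real.exp (θ * z - β * (z : ℝ) ^ 2 / 2) = gw β θ z := rfl
  rw [h3]
  nlinarith [mul_nonneg h1 h2]

lemma summable_mul_gw (β θ : ℝ) (hβ : 0 < β) :
    Summable (fun z : ℤ => (z : ℝ) * gw β θ z) := by
  apply Summable.of_abs
  apply Summable.of_nonneg_of_le (fun z => abs_nonneg _) (fun z => ?_) (summable_abs_mul_gw β θ hβ)
  rw [abs_mul]
  have h0 : 0 ≤ gw β θ z := Real.exp_nonneg _
  rw [abs_of_nonneg h0]
  nlinarith [h0, abs_nonneg ((z : ℝ))]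

lemma cancel_aux (K Z g : ℝ) (hK : K ≠ 0) : (K * Z)⁻¹ * (K * g) = Z⁻¹ * g := by
  rw [mul_inv, mul_comm K⁻¹ Z⁻¹, mul_assoc, ← mul_assoc K⁻¹, inv_mul_cancel₀ hK, one_mul]

theorem mean_shift (β : ℝ) (hβ : 0 < β) (r : ℤ → ℝ)
    (hr : ∀ z : ℤ, r z = Real.exp (-β / 2) * Real.exp (β * z)) (θ : ℝ) :
    Summable (fun z : ℤ => (z : ℝ) * mu r (θ + β) z) ∧
    Summable (fun z : ℤ => (z : ℝ) * mu r θ z) ∧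
    (∑' z : ℤ, (z : ℝ) * mu r (θ + β) z) = 1 + ∑' z : ℤ, (z : ℝ) * mu r θ z := by
  have hrf := rfact_eq β r hr
  have hw : ∀ ϑ : ℝ, ∀ z : ℤ, Real.exp (ϑ * z) / rfact r z = gw β ϑ z := by
    intro ϑ z
    rw [hrf, gw, ← Real.exp_sub]
  have hZ : ∀ ϑ : ℝ, Zfun r ϑ = ∑' z : ℤ, gw β ϑ z := by
    intro ϑ; unfold Zfun; exact tsum_congr (hw ϑ)
  have hZpos : ∀ ϑ : ℝ, 0 < Zfun r ϑ := by
    intro ϑ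
    rw [hZ]
    exact Summable.tsum_pos (summable_gw β ϑ hβ) (fun z => Real.exp_nonneg _) 0 (Real.exp_pos _)
  have hmu : ∀ ϑ : ℝ, ∀ z : ℤ, mu r ϑ z = (Zfun r ϑ)⁻¹ * gw β ϑ z := by
    intro ϑ z
    have hgw : gw β ϑ z = Real.exp (ϑ * z) / Real.exp (β * (z : ℝ) ^ 2 / 2) := by
      rw [gw, Real.exp_sub]
    unfold mu
    rw [hrf, hgw]
    ring
  -- key shift identity for weights
  have hshift : ∀ z : ℤ, gw β (θ + β) z = Real.exp (θ + β / 2) * gw β θ (z - 1) := by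
    intro z
    rw [gw, gw, ← Real.exp_add]
    push_cast
    ring_nf
  -- Z shift
  have hZshift : Zfun r (θ + β) = Real.exp (θ + β / 2) * Zfun r θ := by
    rw [hZ, hZ]
    calc (∑' z : ℤ, gw β (θ + β) z) = ∑' z : ℤ, Real.exp (θ + β / 2) * gw β θ (z - 1) :=
          tsum_congr hshift
      _ = Real.exp (θ + β / 2) * ∑' z : ℤ, gw β θ (z - 1) := tsum_mul_left
      _ = Real.exp (θ + β / 2) * ∑' z : ℤ, gw β θ z := by
          congr 1
          exact (Equiv.subRight (1 : ℤ)).tsum_eq (gw β θ)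
  -- mu shift
  have hmushift : ∀ z : ℤ, mu r (θ + β) z = mu r θ (z - 1) := by
    intro z
    rw [hmu, hmu, hshift, hZshift]
    exact cancel_aux _ _ _ (Real.exp_ne_zero _)
  -- summability of z * mu θ
  have hsum2 : Summable (fun z : ℤ => (z : ℝ) * mu r θ z) := by
    have := (summable_mul_gw β θ hβ).mul_left (Zfun r θ)⁻¹
    apply this.congr
    intro z
    rw [hmu]
    ring
  have hsummu : Summable (fun z : ℤ => mu r θ z) := by
    have := (summable_gw β θ hβ).mul_left (Zfun r θ)⁻¹
    apply this.congr
    intro z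
    rw [hmu]
  have hsummu1 : ∑' z : ℤ, mu r θ z = 1 := by
    have : (∑' z : ℤ, mu r θ z) = (Zfun r θ)⁻¹ * ∑' z : ℤ, gw β θ z := by
      rw [← tsum_mul_left]
      exact tsum_congr (hmu θ)
    rw [this, ← hZ, inv_mul_cancel₀ (ne_of_gt (hZpos θ))]
  -- f w := (w+1) * mu θ w is summable
  have hsumf : Summable (fun w : ℤ => ((w : ℝ) + 1) * mu r θ w) := by
    have := hsum2.add hsummu
    apply this.congr
    intro w
    ring
  have hsum1 : Summable (fun z : ℤ => (z : ℝ) * mu r (θ + β) z) := by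
    have := hsumf.comp_injective (Equiv.subRight (1 : ℤ)).injective
    apply this.congr
    intro z
    simp only [Function.comp, Equiv.subRight_apply]
    rw [hmushift]
    push_cast
    ring
  refine ⟨hsum1, hsum2, ?_⟩
  calc (∑' z : ℤ, (z : ℝ) * mu r (θ + β) z)
      = ∑' z : ℤ, (((z - 1 : ℤ) : ℝ) + 1) * mu r θ (z - 1) := by
        apply tsum_congr
        intro z
        rw [hmushift]
        push_cast
        ring
    _ = ∑' w : ℤ, ((w : ℝ) + 1) * mu r θ w := by
        exact (Equiv.subRight (1 : ℤ)).tsum_eq (fun w => ((w : ℝ) + 1) * mu r θ w)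
    _ = (∑' w : ℤ, (w : ℝ) * mu r θ w) + ∑' w : ℤ, mu r θ w := by
        rw [← Summable.tsum_add hsum2 hsummu]
        apply tsum_congr
        intro w
        ring
    _ = 1 + ∑' z : ℤ, (z : ℝ) * mu r θ z := by
        rw [hsummu1]; ring
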